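/- Let n be a positive integer, let h_1, …, h_n ≥ 0 and Δ ≥ 0 be real numbers, and let c_1 ≤ c_2 ≤ ⋯ ≤ c_n be real scores. With ρ_i = h_i/(1 + Δ·Σ_{k=1}^n h_k), p_{x↑y} = (1 − e^{−h_y·Δ})·∏_{j=y+1}^n e^{−h_j·Δ} for x < y ≤ n, p_{x→x} = ∏_{j=x+1}^n e^{−h_j·Δ}, and r_k = p_{k→k}·ρ_k + Σ_{x=1}^{k−1} p_{x↑k}·ρ_x, one has Σ_{k=1}^n c_k·r_k ≥ Σ_{k=1}^n c_k·ρ_k; that is, the paper's upper bound on the honest fully-delayed score growth rate is at least its lower bound. -/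

import Mathlib

open Finset

private lemma tele_aux (g : ℕ → ℝ) : ∀ n x, x ≤ n →
    g x + ∑ k ∈ Finset.Icc (x+1) n, (g k - g (k-1)) = g n := by
  intro n
  induction n with
  | zero => intro x hx; interval_cases x; simp
  | succ n ih =>
    intro x hx
    rcases Nat.lt_or_ge x (n+1) with h1 | h1
    · have hx' : x ≤ n := by omega
      rw [Finset.sum_Icc_succ_top (by omega)]
      have := ih x hx'
      simp only [Nat.add_sub_cancel]
      linarith
    · have hxe : x = n+1 := by omega
      subst hxe
      simp

/-- With scores `c 1 ≤ c 2 ≤ ⋯ ≤ c n`,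
`ρ i = h i / (1 + Δ·Σ_{k=1}^n h k)`,
`p_{x↑y} = (1 − e^{−h y·Δ})·∏_{j=y+1}^n e^{−h j·Δ}` for `x < y ≤ n`,
`p_{x→x} = ∏_{j=x+1}^n e^{−h j·Δ}`, and
`r k = p_{k→k}·ρ k + Σ_{x=1}^{k−1} p_{x↑k}·ρ x`, one has
`Σ_{k=1}^n c k · r k ≥ Σ_{k=1}^n c k · ρ k`: the paper's upper bound on the
honest fully-delayed score growth rate is at least its lower bound. -/
theorem stmt_7 (n : ℕ) (hn : 0 < n) (h : ℕ → ℝ)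
    (hh : ∀ i ∈ Finset.Icc 1 n, 0 ≤ h i) (Δ : ℝ) (hΔ : 0 ≤ Δ)
    (c : ℕ → ℝ)
    (hc : ∀ i ∈ Finset.Icc 1 n, ∀ j ∈ Finset.Icc 1 n, i ≤ j → c i ≤ c j)
    (ρ : ℕ → ℝ) (hρ : ∀ i, ρ i = h i / (1 + Δ * ∑ k ∈ Finset.Icc 1 n, h k))
    (r : ℕ → ℝ)
    (hr : ∀ k, r k
      = (∏ j ∈ Finset.Icc (k + 1) n, Real.exp (-(h j * Δ))) * ρ k
        + ∑ x ∈ Finset.Icc 1 (k - 1),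
            ((1 - Real.exp (-(h k * Δ)))
              * ∏ j ∈ Finset.Icc (k + 1) n, Real.exp (-(h j * Δ))) * ρ x) :
    ∑ k ∈ Finset.Icc 1 n, c k * ρ k ≤ ∑ k ∈ Finset.Icc 1 n, c k * r k := by
  set E : ℕ → ℝ := fun j => Real.exp (-(h j * Δ)) with hEdef
  set P : ℕ → ℝ := fun k => ∏ j ∈ Finset.Icc (k+1) n, E j with hPdef
  have hP0 : ∀ k, 0 < P k := fun k => Finset.prod_pos (fun j _ => Real.exp_pos _)
  have hρ0 : ∀ i ∈ Finset.Icc 1 n, 0 ≤ ρ i := by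
    intro i hi
    rw [hρ]
    have hS : (0:ℝ) ≤ ∑ k ∈ Finset.Icc 1 n, h k := Finset.sum_nonneg hh
    have : (0:ℝ) ≤ Δ * ∑ k ∈ Finset.Icc 1 n, h k := mul_nonneg hΔ hS
    exact div_nonneg (hh i hi) (by linarith)
  have hw0 : ∀ k ∈ Finset.Icc 1 n, 0 ≤ (1 - E k) * P k := by
    intro k hk
    have hE1 : E k ≤ 1 := Real.exp_le_one_iff.mpr
      (by simpa using mul_nonneg (hh k hk) hΔ)
    exact mul_nonneg (by linarith) (hP0 k).le
  have tele : ∀ x ∈ Finset.Icc 1 n, P x + ∑ k ∈ Finset.Icc (x+1) n, (1 - E k) * P k = 1 := by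
    intro x hx
    simp only [Finset.mem_Icc] at hx
    have key : ∀ k ∈ Finset.Icc (x+1) n, (1 - E k) * P k = P k - P (k-1) := by
      intro k hk
      simp only [Finset.mem_Icc] at hk
      have hPk : P (k-1) = E k * P k := by
        have h1 : k - 1 + 1 = k := by omega
        have h2 : Finset.Icc k n = insert k (Finset.Icc (k+1) n) := by
          ext m; simp only [Finset.mem_Icc, Finset.mem_insert]; omega
        simp only [hPdef, h1, h2]
        rw [Finset.prod_insert (by simp)]
      rw [hPk]; ring
    rw [Finset.sum_congr rfl key, tele_aux P n x (by omega)]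
    simp [hPdef]
  calc ∑ k ∈ Finset.Icc 1 n, c k * ρ k
      = ∑ x ∈ Finset.Icc 1 n,
          (c x * (P x * ρ x) + ∑ k ∈ Finset.Icc (x+1) n, c x * ((1 - E k) * P k * ρ x)) := by
        refine Finset.sum_congr rfl fun x hx => ?_
        have := tele x hx
        have expand : c x * ρ x = (c x * ρ x) * (P x + ∑ k ∈ Finset.Icc (x+1) n, (1 - E k) * P k) := by
          rw [this, mul_one]
        rw [expand, mul_add, Finset.mul_sum]
        congr 1
        · ring
        · exact Finset.sum_congr rfl fun k _ => by ring
    _ ≤ ∑ x ∈ Finset.Icc 1 n,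
          (c x * (P x * ρ x) + ∑ k ∈ Finset.Icc (x+1) n, c k * ((1 - E k) * P k * ρ x)) := by
        refine Finset.sum_le_sum fun x hx => ?_
        refine add_le_add (le_refl _) (Finset.sum_le_sum fun k hk => ?_)
        have hx' := Finset.mem_Icc.mp hx
        have hk' := Finset.mem_Icc.mp hk
        have hkmem : k ∈ Finset.Icc 1 n := Finset.mem_Icc.mpr ⟨by omega, hk'.2⟩
        have hck : c x ≤ c k := hc x hx k hkmem (by omega)
        have hnn : 0 ≤ (1 - E k) * P k * ρ x := mul_nonneg (hw0 k hkmem) (hρ0 x hx)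
        exact mul_le_mul_of_nonneg_right hck hnn
    _ = ∑ k ∈ Finset.Icc 1 n, c k * r k := by
        rw [Finset.sum_add_distrib]
        rw [Finset.sum_comm' (s' := fun k => Finset.Icc 1 (k-1)) (t' := Finset.Icc 1 n)
          (by intro x y; simp only [Finset.mem_Icc]; omega)]
        rw [← Finset.sum_add_distrib]
        refine Finset.sum_congr rfl fun k hk => ?_
        rw [hr k, mul_add, Finset.mul_sum]
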